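/- (Disjoint alignments bound self-edit distance) Let X, Y be strings and let A, A' : X → Y be two alignments which, viewed as paths in the alignment graph AG(X,Y), share no common diagonal edge. Then selfed(X) ≤ ed_A(X,Y) + ed_{A'}(X,Y), where ed_A denotes the number of edits made by alignment A. -/

import Mathlib

abbrev Pt : Type := ℕ × ℕ

/-- A single step in an alignment path: right (deletion of an `X`-character),
down (insertion of a `Y`-character), or diagonal (aligning a pair of characters). -/
def AlignStep (p q : Pt) : Prop :=
  q = (p.1 + 1, p.2) ∨ q = (p.1, p.2 + 1) ∨ q = (p.1 + 1, p.2 + 1)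

/-- `A` is a monotone lattice path from `s` to `t` in the alignment graph. -/
def IsPath (s t : Pt) (A : List Pt) : Prop :=
  A.head? = some s ∧ A.getLast? = some t ∧ A.Chain' AlignStep

/-- The edges (consecutive pairs) of a path. -/
def edges (A : List Pt) : List (Pt × Pt) := A.zip A.tail

/-- Unweighted edit cost contributed by one edge: a diagonal edge costs 0 if the
two characters match and 1 otherwise (substitution); horizontal/vertical edges
(deletions/insertions) cost 1. -/
def edStep {α : Type*} [DecidableEq α] (X Y : List α) (e : Pt × Pt) : ℕ :=
  if e.2 = (e.1.1 + 1, e.1.2 + 1) then (if X[e.1.1]? = Y[e.1.2]? then 0 else 1) else 1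

/-- The number of edits made by the alignment (path) `A` of `X` onto `Y`. -/
def edCost {α : Type*} [DecidableEq α] (X Y : List α) (A : List Pt) : ℕ :=
  ((edges A).map (edStep X Y)).sum

/-- Weighted cost contributed by one edge, under weight function `w` (with `none` playing
the role of `ε`): diagonal edges cost `w X[x] Y[y]`, horizontal `w X[x] ε`, vertical `w ε Y[y]`. -/
noncomputable def wStep {α : Type*} (w : Option α → Option α → ℝ) (X Y : List α)
    (e : Pt × Pt) : ℝ :=
  if e.2 = (e.1.1 + 1, e.1.2 + 1) then w (X[e.1.1]?) (Y[e.1.2]?)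
  else if e.2 = (e.1.1 + 1, e.1.2) then w (X[e.1.1]?) none
  else w none (Y[e.1.2]?)

/-- The weighted cost of the alignment (path) `A` of `X` onto `Y` under `w`. -/
noncomputable def wCost {α : Type*} (w : Option α → Option α → ℝ) (X Y : List α)
    (A : List Pt) : ℝ :=
  ((edges A).map (wStep w X Y)).sum

/-- Unweighted (Levenshtein) edit distance. -/
noncomputable def ed {α : Type*} [DecidableEq α] (X Y : List α) : ℕ :=
  sInf { c | ∃ A, IsPath (0, 0) (X.length, Y.length) A ∧ edCost X Y A = c }

/-- Weighted edit distance under `w`. -/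
noncomputable def wed {α : Type*} (w : Option α → Option α → ℝ) (X Y : List α) : ℝ :=
  sInf { c | ∃ A, IsPath (0, 0) (X.length, Y.length) A ∧ wCost w X Y A = c }

/-- A path contains no diagonal edge on the main diagonal,
i.e. it never aligns a character to itself. -/
def NoSelfDiag (A : List Pt) : Prop :=
  ∀ e ∈ edges A, ¬ (e.1.1 = e.1.2 ∧ e.2 = (e.1.1 + 1, e.1.2 + 1))

/-- The self-edit distance of `X`: the minimum number of edits over all
self-alignments of `X` (alignments of `X` onto itself never aligning a character
to itself). -/
noncomputable def selfed {α : Type*} [DecidableEq α] (X : List α) : ℕ :=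
  sInf { c | ∃ A, IsPath (0, 0) (X.length, X.length) A ∧ NoSelfDiag A ∧ edCost X X A = c }

/-- The fragment `X[a..b)`. -/
def frag {α : Type*} (X : List α) (a b : ℕ) : List α := (X.drop a).take (b - a)

/- ===== auxiliary development ===== -/

inductive Mv | R | D | G
deriving DecidableEq

open Mv

def xlen : List Mv → ℕ
  | [] => 0
  | R :: t => xlen t + 1
  | D :: t => xlen t
  | G :: t => xlen t + 1

def ylen : List Mv → ℕ
  | [] => 0
  | R :: t => ylen t
  | D :: t => ylen t + 1
  | G :: t => ylen t + 1

def mstep (p : Pt) : Mv → Pt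
  | R => (p.1 + 1, p.2)
  | D => (p.1, p.2 + 1)
  | G => (p.1 + 1, p.2 + 1)

def mpath (p : Pt) : List Mv → List Pt
  | [] => [p]
  | m :: t => p :: mpath (mstep p m) t

def mcost {α : Type*} [DecidableEq α] (X Y : List α) : Pt → List Mv → ℕ
  | _, [] => 0
  | p, R :: t => 1 + mcost X Y (mstep p R) t
  | p, D :: t => 1 + mcost X Y (mstep p D) t
  | p, G :: t => (if X[p.1]? = Y[p.2]? then 0 else 1) + mcost X Y (mstep p G) t

def mdiags : Pt → List Mv → List (Pt × Pt)
  | _, [] => []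
  | p, G :: t => (p, mstep p G) :: mdiags (mstep p G) t
  | p, R :: t => mdiags (mstep p R) t
  | p, D :: t => mdiags (mstep p D) t

lemma mpath_cons (p : Pt) (ms : List Mv) : ∃ l, mpath p ms = p :: l := by
  cases ms <;> exact ⟨_, rfl⟩

lemma mpath_head? (p : Pt) (ms : List Mv) : (mpath p ms).head? = some p := by
  obtain ⟨l, hl⟩ := mpath_cons p ms; rw [hl]; rfl

lemma mpath_getLast? (ms : List Mv) (p : Pt) :
    (mpath p ms).getLast? = some (p.1 + xlen ms, p.2 + ylen ms) := by
  induction ms generalizing p with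
  | nil => simp [mpath, xlen, ylen]
  | cons m t ih =>
    obtain ⟨l, hl⟩ := mpath_cons (mstep p m) t
    show (p :: mpath (mstep p m) t).getLast? = _
    rw [hl, List.getLast?_cons_cons, ← hl, ih]
    cases m <;> simp [mstep, xlen, ylen] <;> omega

lemma mpath_chain (ms : List Mv) (p : Pt) : (mpath p ms).Chain' AlignStep := by
  induction ms generalizing p with
  | nil => simp [mpath, List.Chain']
  | cons m t ih =>
    obtain ⟨l, hl⟩ := mpath_cons (mstep p m) t
    show (p :: mpath (mstep p m) t).Chain' AlignStep
    rw [hl, List.Chain', List.isChain_cons_cons, ← hl]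
    refine ⟨?_, ih _⟩
    cases m
    · exact Or.inl rfl
    · exact Or.inr (Or.inl rfl)
    · exact Or.inr (Or.inr rfl)

lemma edges_cons (a : Pt) (l : List Pt) (b : Pt) (l' : List Pt) (h : l = b :: l') :
    edges (a :: l) = (a, b) :: edges l := by subst h; rfl

lemma edCost_mpath {α : Type*} [DecidableEq α] (X Y : List α) (ms : List Mv) (p : Pt) :
    edCost X Y (mpath p ms) = mcost X Y p ms := by
  induction ms generalizing p with
  | nil => rfl
  | cons m t ih =>
    obtain ⟨l, hl⟩ := mpath_cons (mstep p m) t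
    show edCost X Y (p :: mpath (mstep p m) t) = _
    rw [edCost, edges_cons p _ _ _ hl, List.map_cons, List.sum_cons, ← edCost, ih]
    cases m <;> simp [mcost, edStep, mstep, Prod.ext_iff]

lemma exists_moves (A : List Pt) (p : Pt) (hc : A.Chain' AlignStep) (hh : A.head? = some p) :
    ∃ ms, mpath p ms = A := by
  induction A generalizing p with
  | nil => simp at hh
  | cons a l ih =>
    have hap : a = p := by simpa using hh
    subst hap
    cases l with
    | nil => exact ⟨[], rfl⟩
    | cons b l' =>
      rw [List.Chain', List.isChain_cons_cons] at hc
      obtain ⟨hs, hc'⟩ := hc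
      obtain ⟨ms, hms⟩ := ih b hc' rfl
      rcases hs with h | h | h
      · exact ⟨R :: ms, by simp only [mpath, mstep]; rw [← h, hms]⟩
      · exact ⟨D :: ms, by simp only [mpath, mstep]; rw [← h, hms]⟩
      · exact ⟨G :: ms, by simp only [mpath, mstep]; rw [← h, hms]⟩

lemma mdiags_mem {e : Pt × Pt} (ms : List Mv) (p : Pt) (h : e ∈ mdiags p ms) :
    e ∈ edges (mpath p ms) ∧ e.2 = (e.1.1 + 1, e.1.2 + 1) := by
  induction ms generalizing p with
  | nil => simp [mdiags] at h
  | cons m t ih =>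
    obtain ⟨l, hl⟩ := mpath_cons (mstep p m) t
    have hedge : edges (mpath p (m :: t)) = (p, mstep p m) :: edges (mpath (mstep p m) t) := by
      show edges (p :: mpath (mstep p m) t) = _
      rw [edges_cons p _ _ _ hl, hl]
    cases m with
    | G =>
      rcases (by simpa [mdiags] using h : e = (p, mstep p G) ∨ e ∈ mdiags (mstep p G) t) with h' | h'
      · subst h'; exact ⟨by rw [hedge]; exact List.mem_cons_self, rfl⟩
      · obtain ⟨h1, h2⟩ := ih _ h'; exact ⟨by rw [hedge]; exact List.mem_cons_of_mem _ h1, h2⟩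
    | R =>
      obtain ⟨h1, h2⟩ := ih _ (by simpa [mdiags] using h)
      exact ⟨by rw [hedge]; exact List.mem_cons_of_mem _ h1, h2⟩
    | D =>
      obtain ⟨h1, h2⟩ := ih _ (by simpa [mdiags] using h)
      exact ⟨by rw [hedge]; exact List.mem_cons_of_mem _ h1, h2⟩

lemma mem_mdiags {e : Pt × Pt} (ms : List Mv) (p : Pt)
    (h : e ∈ edges (mpath p ms)) (hd : e.2 = (e.1.1 + 1, e.1.2 + 1)) :
    e ∈ mdiags p ms := by
  induction ms generalizing p with
  | nil => simp [mpath, edges] at h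
  | cons m t ih =>
    obtain ⟨l, hl⟩ := mpath_cons (mstep p m) t
    have hedge : edges (mpath p (m :: t)) = (p, mstep p m) :: edges (mpath (mstep p m) t) := by
      show edges (p :: mpath (mstep p m) t) = _
      rw [edges_cons p _ _ _ hl, hl]
    rw [hedge, List.mem_cons] at h
    cases m with
    | G =>
      rcases h with h | h
      · simp [mdiags, h]
      · simp [mdiags]; exact Or.inr (ih _ h)
    | R =>
      rcases h with h | h
      · exfalso; subst h; simp [mstep, Prod.ext_iff] at hd
      · simpa [mdiags] using ih _ h
    | D =>
      rcases h with h | h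
      · exfalso; subst h; simp [mstep, Prod.ext_iff] at hd
      · simpa [mdiags] using ih _ h

def comp : List Mv → List Mv → List Mv
  | R :: t, ms' => R :: comp t ms'
  | D :: t, R :: t' => D :: comp (D :: t) t'
  | G :: t, R :: t' => D :: comp (G :: t) t'
  | [], R :: t' => D :: comp [] t'
  | D :: t, D :: t' => comp t t'
  | D :: t, G :: t' => D :: comp t t'
  | G :: t, D :: t' => R :: comp t t'
  | G :: t, G :: t' => G :: comp t t'
  | _, _ => []
termination_by ms ms' => ms.length + ms'.length

lemma comp_len : ∀ ms ms' : List Mv, ylen ms = ylen ms' →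
    xlen (comp ms ms') = xlen ms ∧ ylen (comp ms ms') = xlen ms' := by
  intro ms ms'
  induction ms, ms' using comp.induct with
  | case1 t ms' ih =>
    intro hy
    obtain ⟨h1, h2⟩ := ih (by simpa [ylen] using hy)
    simp [comp, xlen, ylen, h1, h2]
  | case2 t t' ih =>
    intro hy
    obtain ⟨h1, h2⟩ := ih (by simpa [ylen] using hy)
    simp [comp, xlen, ylen, h1, h2]
  | case3 t t' ih =>
    intro hy
    obtain ⟨h1, h2⟩ := ih (by simpa [ylen] using hy)
    simp [comp, xlen, ylen, h1, h2]
  | case4 t' ih =>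
    intro hy
    obtain ⟨h1, h2⟩ := ih (by simpa [ylen] using hy)
    simp [comp, xlen, ylen, h1, h2]
  | case5 t t' ih =>
    intro hy
    obtain ⟨h1, h2⟩ := ih (by simpa [ylen] using hy)
    simp [comp, xlen, ylen, h1, h2]
  | case6 t t' ih =>
    intro hy
    obtain ⟨h1, h2⟩ := ih (by simpa [ylen] using hy)
    simp [comp, xlen, ylen, h1, h2]
  | case7 t t' ih =>
    intro hy
    obtain ⟨h1, h2⟩ := ih (by simpa [ylen] using hy)
    simp [comp, xlen, ylen, h1, h2]
  | case8 t t' ih =>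
    intro hy
    obtain ⟨h1, h2⟩ := ih (by simpa [ylen] using hy)
    simp [comp, xlen, ylen, h1, h2]
  | case9 ms ms' h1 h2 h3 h4 h5 h6 h7 h8 =>
    intro hy
    -- unreachable unless both nil
    cases ms with
    | nil =>
      cases ms' with
      | nil => simp [comp, xlen, ylen]
      | cons m' t' =>
        cases m' with
        | R => exact (h4 t' rfl rfl).elim
        | D => simp [ylen] at hy
        | G => simp [ylen] at hy
    | cons m t =>
      cases m with
      | R => exact (h1 t rfl).elim
      | D =>
        cases ms' with
        | nil => simp [ylen] at hy
        | cons m' t' =>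
          cases m' with
          | R => exact (h2 t t' rfl rfl).elim
          | D => exact (h5 t t' rfl rfl).elim
          | G => exact (h6 t t' rfl rfl).elim
      | G =>
        cases ms' with
        | nil => simp [ylen] at hy
        | cons m' t' =>
          cases m' with
          | R => exact (h3 t t' rfl rfl).elim
          | D => exact (h7 t t' rfl rfl).elim
          | G => exact (h8 t t' rfl rfl).elim

lemma comp_cost {α : Type*} [DecidableEq α] (X Y : List α) :
    ∀ ms ms' : List Mv, ∀ x x' y : ℕ,
    mcost X X (x, x') (comp ms ms') ≤ mcost X Y (x, y) ms + mcost X Y (x', y) ms' := by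
  intro ms ms'
  induction ms, ms' using comp.induct with
  | case1 t ms' ih =>
    intro x x' y
    have := ih (x + 1) x' y
    simp only [comp, mcost, mstep] at *
    omega
  | case2 t t' ih =>
    intro x x' y
    have := ih x (x' + 1) y
    simp only [comp, mcost, mstep] at *
    omega
  | case3 t t' ih =>
    intro x x' y
    have := ih x (x' + 1) y
    simp only [comp, mcost, mstep] at *
    split_ifs at * <;> omega
  | case4 t' ih =>
    intro x x' y
    have := ih x (x' + 1) y
    simp only [comp, mcost, mstep] at *
    omega
  | case5 t t' ih =>
    intro x x' y
    have := ih x x' (y + 1)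
    simp only [comp, mcost, mstep] at *
    omega
  | case6 t t' ih =>
    intro x x' y
    have := ih x (x' + 1) (y + 1)
    simp only [comp, mcost, mstep] at *
    split_ifs at * <;> omega
  | case7 t t' ih =>
    intro x x' y
    have := ih (x + 1) x' (y + 1)
    simp only [comp, mcost, mstep] at *
    split_ifs at * <;> omega
  | case8 t t' ih =>
    intro x x' y
    have := ih (x + 1) (x' + 1) (y + 1)
    simp only [comp, mcost, mstep] at *
    split_ifs at * with h1 h2 h3 <;> try omega
    all_goals {
      first
      | omega
      | (exfalso; apply ‹¬ _›; rw [‹X[x]? = Y[y]?›, ← ‹X[x']? = Y[y]?›])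
    }
  | case9 ms ms' h1 h2 h3 h4 h5 h6 h7 h8 =>
    intro x x' y
    -- comp ms ms' = [] in the catch-all
    have hc : comp ms ms' = [] := by
      rw [comp.eq_def]
      cases ms with
      | nil =>
        cases ms' with
        | nil => rfl
        | cons m' t' =>
          cases m' with
          | R => exact (h4 t' rfl rfl).elim
          | D => rfl
          | G => rfl
      | cons m t =>
        cases m with
        | R => exact (h1 t rfl).elim
        | D =>
          cases ms' with
          | nil => rfl
          | cons m' t' =>
            cases m' with
            | R => exact (h2 t t' rfl rfl).elim
            | D => exact (h5 t t' rfl rfl).elim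
            | G => exact (h6 t t' rfl rfl).elim
        | G =>
          cases ms' with
          | nil => rfl
          | cons m' t' =>
            cases m' with
            | R => exact (h3 t t' rfl rfl).elim
            | D => exact (h7 t t' rfl rfl).elim
            | G => exact (h8 t t' rfl rfl).elim
    rw [hc]
    exact Nat.zero_le _

lemma comp_nil_of_default : ∀ ms ms' : List Mv,
    (∀ t : List Mv, ¬ ms = R :: t) →
    (∀ t t' : List Mv, ¬(ms = D :: t ∧ ms' = R :: t')) →
    (∀ t t' : List Mv, ¬(ms = G :: t ∧ ms' = R :: t')) →
    (∀ t' : List Mv, ¬(ms = [] ∧ ms' = R :: t')) →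
    (∀ t t' : List Mv, ¬(ms = D :: t ∧ ms' = D :: t')) →
    (∀ t t' : List Mv, ¬(ms = D :: t ∧ ms' = G :: t')) →
    (∀ t t' : List Mv, ¬(ms = G :: t ∧ ms' = D :: t')) →
    (∀ t t' : List Mv, ¬(ms = G :: t ∧ ms' = G :: t')) →
    comp ms ms' = [] := by
  intro ms ms' h1 h2 h3 h4 h5 h6 h7 h8
  rw [comp.eq_def]
  cases ms with
  | nil =>
    cases ms' with
    | nil => rfl
    | cons m' t' =>
      cases m' with
      | R => exact (h4 t' ⟨rfl, rfl⟩).elim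
      | D => rfl
      | G => rfl
  | cons m t =>
    cases m with
    | R => exact (h1 t rfl).elim
    | D =>
      cases ms' with
      | nil => rfl
      | cons m' t' =>
        cases m' with
        | R => exact (h2 t t' ⟨rfl, rfl⟩).elim
        | D => exact (h5 t t' ⟨rfl, rfl⟩).elim
        | G => exact (h6 t t' ⟨rfl, rfl⟩).elim
    | G =>
      cases ms' with
      | nil => rfl
      | cons m' t' =>
        cases m' with
        | R => exact (h3 t t' ⟨rfl, rfl⟩).elim
        | D => exact (h7 t t' ⟨rfl, rfl⟩).elim
        | G => exact (h8 t t' ⟨rfl, rfl⟩).elim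

lemma comp_diag :
    ∀ ms ms' : List Mv, ∀ x x' y : ℕ,
    (∀ e ∈ mdiags (x, y) ms, e ∉ mdiags (x', y) ms') →
    ∀ e ∈ mdiags (x, x') (comp ms ms'), e.1.1 ≠ e.1.2 := by
  intro ms ms'
  induction ms, ms' using comp.induct with
  | case1 t ms' ih =>
    intro x x' y hd e he
    simp only [comp, mdiags, mstep] at he
    exact ih (x + 1) x' y (by simpa [mdiags, mstep] using hd) e he
  | case2 t t' ih =>
    intro x x' y hd e he
    simp only [comp, mdiags, mstep] at he
    exact ih x (x' + 1) y (by simpa [mdiags, mstep] using hd) e he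
  | case3 t t' ih =>
    intro x x' y hd e he
    simp only [comp, mdiags, mstep] at he
    exact ih x (x' + 1) y (by simpa [mdiags, mstep] using hd) e he
  | case4 t' ih =>
    intro x x' y hd e he
    simp only [comp, mdiags, mstep] at he
    exact ih x (x' + 1) y (by simpa [mdiags, mstep] using hd) e he
  | case5 t t' ih =>
    intro x x' y hd e he
    simp only [comp, mdiags, mstep] at he
    exact ih x x' (y + 1) (by simpa [mdiags, mstep] using hd) e he
  | case6 t t' ih =>
    intro x x' y hd e he
    simp only [comp, mdiags, mstep] at he
    refine ih x (x' + 1) (y + 1) ?_ e he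
    intro f hf hf'
    exact hd f (by simpa [mdiags, mstep] using hf) (by simp [mdiags, mstep]; exact Or.inr hf')
  | case7 t t' ih =>
    intro x x' y hd e he
    simp only [comp, mdiags, mstep] at he
    refine ih (x + 1) x' (y + 1) ?_ e he
    intro f hf hf'
    exact hd f (by simp [mdiags, mstep]; exact Or.inr hf) (by simpa [mdiags, mstep] using hf')
  | case8 t t' ih =>
    intro x x' y hd e he
    simp only [comp, mdiags, mstep] at he
    rw [List.mem_cons] at he
    rcases he with he | he
    · subst he
      simp only [ne_eq]
      intro hxx
      subst hxx
      exact hd ((x, y), (x + 1, y + 1)) (by simp [mdiags, mstep]) (by simp [mdiags, mstep])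
    · refine ih (x + 1) (x' + 1) (y + 1) ?_ e he
      intro f hf hf'
      exact hd f (by simp [mdiags, mstep]; exact Or.inr hf) (by simp [mdiags, mstep]; exact Or.inr hf')
  | case9 ms ms' h1 h2 h3 h4 h5 h6 h7 h8 =>
    intro x x' y hd e he
    rw [comp_nil_of_default ms ms'
      (fun t => h1 t) (fun t t' h => h2 t t' h.1 h.2) (fun t t' h => h3 t t' h.1 h.2)
      (fun t' h => h4 t' h.1 h.2) (fun t t' h => h5 t t' h.1 h.2)
      (fun t t' h => h6 t t' h.1 h.2) (fun t t' h => h7 t t' h.1 h.2)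
      (fun t t' h => h8 t t' h.1 h.2)] at he
    simp [mdiags] at he

/-- If two alignments of `X` onto `Y` share no common diagonal edge,
then `selfed X` is at most the sum of their edit counts. -/
theorem selfed_le_of_disjoint_alignments {α : Type*} [DecidableEq α] (X Y : List α)
    (A A' : List Pt)
    (hA : IsPath (0, 0) (X.length, Y.length) A)
    (hA' : IsPath (0, 0) (X.length, Y.length) A')
    (hdisj : ∀ e : Pt × Pt, e.2 = (e.1.1 + 1, e.1.2 + 1) →
      e ∈ edges A → e ∉ edges A') :
    selfed X ≤ edCost X Y A + edCost X Y A' := by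
  obtain ⟨hhA, hlA, hcA⟩ := hA
  obtain ⟨hhA', hlA', hcA'⟩ := hA'
  obtain ⟨ms, hms⟩ := exists_moves A (0, 0) hcA hhA
  obtain ⟨ms', hms'⟩ := exists_moves A' (0, 0) hcA' hhA'
  have e1 : (((0, 0) : Pt).1 + xlen ms, ((0, 0) : Pt).2 + ylen ms)
      = ((X.length, Y.length) : Pt) := by
    have := mpath_getLast? ms (0, 0)
    rw [hms, hlA] at this
    exact (Option.some.inj this).symm
  have e2 : (((0, 0) : Pt).1 + xlen ms', ((0, 0) : Pt).2 + ylen ms')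
      = ((X.length, Y.length) : Pt) := by
    have := mpath_getLast? ms' (0, 0)
    rw [hms', hlA'] at this
    exact (Option.some.inj this).symm
  simp only [Prod.mk.injEq, Nat.zero_add] at e1 e2
  have hy : ylen ms = ylen ms' := e1.2.trans e2.2.symm
  obtain ⟨hx1, hy1⟩ := comp_len ms ms' hy
  have hdd : ∀ f ∈ mdiags ((0 : ℕ), (0 : ℕ)) ms, f ∉ mdiags ((0 : ℕ), (0 : ℕ)) ms' := by
    intro f hf hf'
    obtain ⟨hfe, hfd⟩ := mdiags_mem ms (0, 0) hf
    obtain ⟨hfe', _⟩ := mdiags_mem ms' (0, 0) hf'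
    rw [hms] at hfe
    rw [hms'] at hfe'
    exact hdisj f hfd hfe hfe'
  have hmem : edCost X X (mpath (0, 0) (comp ms ms')) ∈
      { c | ∃ B, IsPath (0, 0) (X.length, X.length) B ∧ NoSelfDiag B ∧ edCost X X B = c } := by
    refine ⟨mpath (0, 0) (comp ms ms'), ⟨mpath_head? _ _, ?_, mpath_chain _ _⟩, ?_, rfl⟩
    · rw [mpath_getLast?]
      simp [hx1, hy1, e1.1, e2.1]
    · intro e he hcontra
      obtain ⟨hee, hd⟩ := hcontra
      have hm := mem_mdiags (comp ms ms') (0, 0) he hd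
      exact comp_diag ms ms' 0 0 0 hdd e hm hee
  calc selfed X ≤ edCost X X (mpath (0, 0) (comp ms ms')) := Nat.sInf_le hmem
    _ = mcost X X ((0 : ℕ), (0 : ℕ)) (comp ms ms') := edCost_mpath X X _ _
    _ ≤ mcost X Y ((0 : ℕ), (0 : ℕ)) ms + mcost X Y ((0 : ℕ), (0 : ℕ)) ms' :=
        comp_cost X Y ms ms' 0 0 0
    _ = edCost X Y A + edCost X Y A' := by
        rw [← hms, ← hms', edCost_mpath, edCost_mpath]
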